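/- For all natural numbers m, n and every complex number a such that a, a+1, ..., a+m+n-1 are all nonzero, one has ∑_{k=0}^{min(m,n)} ((-m)_k (-n)_k)/((a)_k k!) = (a)_{m+n} / ((a)_m (a)_n), where (x)_k is the Pochhammer symbol. -/

import Mathlib

open Finset

/-- Pochhammer symbol (rising factorial): `(a)_k = a (a+1) ⋯ (a+k-1)`. -/
noncomputable def poch (a : ℂ) (k : ℕ) : ℂ := ∏ j ∈ Finset.range k, (a + j)

lemma poch_zero (a : ℂ) : poch a 0 = 1 := by simp [poch]

lemma poch_succ (a : ℂ) (k : ℕ) : poch a (k+1) = poch a k * (a + k) := by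
  simp [poch, Finset.prod_range_succ]

lemma poch_succ' (a : ℂ) (k : ℕ) : poch a (k+1) = a * poch (a+1) k := by
  rw [poch, Finset.prod_range_succ']
  simp only [Nat.cast_zero, add_zero]
  rw [mul_comm, poch]
  congr 1
  refine Finset.prod_congr rfl fun j _ => ?_
  push_cast; ring

lemma poch_add (a : ℂ) (s t : ℕ) : poch a (s+t) = poch a s * poch (a+s) t := by
  induction t with
  | zero => simp [poch_zero]
  | succ t ih =>
      rw [← Nat.add_assoc, poch_succ, ih, poch_succ]
      push_cast; ring

lemma poch_ne_zero (a : ℂ) (k : ℕ) (h : ∀ j, j < k → a + j ≠ 0) : poch a k ≠ 0 := by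
  rw [poch]
  exact Finset.prod_ne_zero_iff.mpr fun j hj => h j (Finset.mem_range.mp hj)

lemma poch_neg_eq_zero (n k : ℕ) (h : n < k) : poch (-(n:ℂ)) k = 0 := by
  rw [poch]
  apply Finset.prod_eq_zero (Finset.mem_range.mpr h)
  simp

lemma poch_neg (n k : ℕ) (h : k ≤ n) :
    poch (-(n:ℂ)) k = (-1)^k * ((n.descFactorial k : ℕ) : ℂ) := by
  induction k with
  | zero => simp [poch_zero]
  | succ k ih =>
      rw [poch_succ, ih (Nat.le_of_succ_le h), Nat.descFactorial_succ]
      have hk : k < n := h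
      have h1 : -(n:ℂ) + k = -(((n - k : ℕ) : ℂ)) := by
        push_cast [Nat.cast_sub (le_of_lt hk)]; ring
      rw [h1]
      push_cast
      ring

lemma key (m : ℕ) : ∀ n : ℕ, ∀ a : ℂ,
    ∑ k ∈ Finset.range (n+1),
        (m.choose k : ℂ) * (n.choose k : ℂ) * (k.factorial : ℂ) * poch (a+k) (n-k)
      = poch (a+m) n := by
  induction m with
  | zero =>
      intro n a
      rw [Finset.sum_eq_single 0]
      · simp
      · intro k _ hk
        rw [Nat.choose_eq_zero_of_lt (Nat.pos_of_ne_zero hk)]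
        simp
      · intro h; simp at h
  | succ m ih =>
      intro n a
      cases n with
      | zero => simp [poch_zero]
      | succ N =>
        have hsplit : ∀ k ∈ Finset.range (N+2),
            ((m+1).choose k : ℂ) * ((N+1).choose k : ℂ) * (k.factorial : ℂ) * poch (a+k) (N+1-k)
            = (m.choose k : ℂ) * ((N+1).choose k : ℂ) * (k.factorial : ℂ) * poch (a+k) (N+1-k)
              + (if k = 0 then 0 else
                (m.choose (k-1) : ℂ) * ((N+1).choose k : ℂ) * (k.factorial : ℂ) * poch (a+k) (N+1-k)) := by
          intro k _
          cases k with
          | zero => simp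
          | succ k =>
              simp only [Nat.succ_ne_zero, Nat.add_sub_cancel, ite_false, if_false]
              have hc : (((m+1).choose (k+1) : ℕ) : ℂ)
                  = (m.choose k : ℂ) + (m.choose (k+1) : ℂ) := by
                exact_mod_cast congrArg (Nat.cast (R := ℂ)) (Nat.choose_succ_succ m k)
              rw [hc]
              ring
        rw [Finset.sum_congr rfl hsplit, Finset.sum_add_distrib, ih (N+1) a]
        have h2 : ∑ k ∈ Finset.range (N+2),
            (if k = 0 then (0:ℂ) else
              (m.choose (k-1) : ℂ) * ((N+1).choose k : ℂ) * (k.factorial : ℂ) * poch (a+k) (N+1-k))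
            = (N+1 : ℂ) * poch ((a+1)+m) N := by
          rw [Finset.sum_range_succ']
          simp only [Nat.succ_ne_zero, ite_false, if_false, if_true, ite_true, Nat.add_sub_cancel,
            Nat.succ_sub_succ, Nat.sub_zero, add_zero]
          rw [← ih N (a+1), Finset.mul_sum]
          refine Finset.sum_congr rfl fun k hk => ?_
          have hc : ((N:ℂ)+1) * (N.choose k : ℂ) = ((N+1).choose (k+1) : ℂ) * ((k:ℂ)+1) := by
            exact_mod_cast congrArg (Nat.cast (R := ℂ)) (Nat.add_one_mul_choose_eq N k)
          have hfac : (((k+1).factorial : ℕ) : ℂ) = ((k:ℂ)+1) * (k.factorial : ℂ) := by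
            rw [Nat.factorial_succ]; push_cast; ring
          have hp : a + (((k+1 : ℕ)) : ℂ) = (a+1) + k := by push_cast; ring
          rw [hfac, hp]
          linear_combination (-(m.choose k : ℂ) * (k.factorial : ℂ) * poch ((a+1)+k) (N-k)) * hc
        rw [h2]
        have e1 : (a+1) + (m:ℂ) = (a + m) + 1 := by ring
        have e2 : a + (((m+1 : ℕ)) : ℂ) = (a + m) + 1 := by push_cast; ring
        rw [e1, e2, poch_succ', poch_succ]
        ring

/-- Eigenvalue of the Burchnall–Chaundy operator `∇(a)` on `x^m y^n`:
`∑_{k=0}^{min(m,n)} ((-m)_k (-n)_k)/((a)_k k!) = (a)_{m+n}/((a)_m (a)_n)`. -/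
theorem nabla_eigenvalue (m n : ℕ) (a : ℂ) (ha : ∀ j : ℕ, j < m + n → a + j ≠ 0) :
    ∑ k ∈ Finset.range (min m n + 1),
        poch (-(m : ℂ)) k * poch (-(n : ℂ)) k / (poch a k * (k.factorial : ℂ)) =
      poch a (m + n) / (poch a m * poch a n) := by
  have hpk : ∀ k, k ≤ m + n → poch a k ≠ 0 := fun k hk =>
    poch_ne_zero a k fun j hj => ha j (lt_of_lt_of_le hj hk)
  have hm : poch a m ≠ 0 := hpk m (Nat.le_add_right m n)
  have hn : poch a n ≠ 0 := hpk n (Nat.le_add_left n m)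
  have hext : ∑ k ∈ Finset.range (min m n + 1),
      poch (-(m : ℂ)) k * poch (-(n : ℂ)) k / (poch a k * (k.factorial : ℂ))
      = ∑ k ∈ Finset.range (n + 1),
      poch (-(m : ℂ)) k * poch (-(n : ℂ)) k / (poch a k * (k.factorial : ℂ)) := by
    apply Finset.sum_subset
    · intro x hx
      simp only [Finset.mem_range] at *
      omega
    · intro x hx hx'
      simp only [Finset.mem_range] at hx hx'
      rw [poch_neg_eq_zero m x (by omega)]
      simp
  rw [hext]
  have hterm : ∀ k ∈ Finset.range (n+1),
      poch (-(m : ℂ)) k * poch (-(n : ℂ)) k / (poch a k * (k.factorial : ℂ))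
      = (m.choose k : ℂ) * (n.choose k : ℂ) * (k.factorial : ℂ) * poch (a+k) (n-k) / poch a n := by
    intro k hk
    rw [Finset.mem_range] at hk
    have hkn : k ≤ n := by omega
    by_cases hkm : k ≤ m
    · have hsplitn : poch a n = poch a k * poch (a+k) (n-k) := by
        rw [← poch_add]; congr 1; omega
      have hQ : poch (a+k) (n-k) ≠ 0 := by
        intro h; apply hn; rw [hsplitn, h, mul_zero]
      have hP : poch a k ≠ 0 := hpk k (by omega)
      have hf : (k.factorial : ℂ) ≠ 0 := Nat.cast_ne_zero.mpr k.factorial_ne_zero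
      have hprod : poch (-(m : ℂ)) k * poch (-(n : ℂ)) k
          = (m.choose k : ℂ) * (n.choose k : ℂ) * (k.factorial : ℂ) * (k.factorial : ℂ) := by
        rw [poch_neg m k hkm, poch_neg n k hkn,
          Nat.descFactorial_eq_factorial_mul_choose, Nat.descFactorial_eq_factorial_mul_choose]
        have h1 : ((-1:ℂ))^k * (-1)^k = 1 := by
          rw [← pow_add, ← two_mul, pow_mul]; norm_num
        push_cast
        linear_combination ((k.factorial : ℂ) * (m.choose k : ℂ) * (k.factorial : ℂ) * (n.choose k : ℂ)) * h1
      rw [hprod, hsplitn]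
      field_simp
    · rw [poch_neg_eq_zero m k (by omega), Nat.choose_eq_zero_of_lt (by omega)]
      simp
  rw [Finset.sum_congr rfl hterm, ← Finset.sum_div, key m n a, poch_add a m n,
    mul_div_mul_left _ _ hm]
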